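/- Let α be irrational and N ≥ 2. Write first = first(N) and last = last(N). For every m with 0 ≤ m < N, define after(m) as the point whose fractional part {after(m)·α} is the smallest among those strictly greater than {m·α} (and after(m) = 0 if {m·α} is maximal). Then: after(m) - m = first if 0 ≤ m < N - first; after(m) - m = first - last if N - first ≤ m < last; and after(m) - m = -last if last ≤ m < N. In particular, the N points {0·α}, {1·α}, ..., {(N-1)·α} partition the circle into gaps of at most three distinct lengths. -/

import Mathlib

private lemma fract_add_fract' (x y : ℝ) :
    Int.fract (Int.fract x + Int.fract y) = Int.fract (x + y) := by
  have h : Int.fract x + Int.fract y = (x + y) - ((⌊x⌋ + ⌊y⌋ : ℤ) : ℝ) := by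
    unfold Int.fract; push_cast; ring
  rw [h, Int.fract_sub_intCast]

private lemma fract_sub_fract' (x y : ℝ) :
    Int.fract (Int.fract x - Int.fract y) = Int.fract (x - y) := by
  have h : Int.fract x - Int.fract y = (x - y) - ((⌊x⌋ - ⌊y⌋ : ℤ) : ℝ) := by
    unfold Int.fract; push_cast; ring
  rw [h, Int.fract_sub_intCast]

private lemma fract_add_sub' (x y z : ℝ) :
    Int.fract (Int.fract x + Int.fract y - Int.fract z) = Int.fract (x + y - z) := by
  have h : Int.fract x + Int.fract y - Int.fract z
      = (x + y - z) - ((⌊x⌋ + ⌊y⌋ - ⌊z⌋ : ℤ) : ℝ) := by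
    unfold Int.fract; push_cast; ring
  rw [h, Int.fract_sub_intCast]

private lemma fract_neg_case' (x : ℝ) (h1 : -1 < x) (h2 : x < 0) : Int.fract x = x + 1 :=
  calc Int.fract x = Int.fract ((x + 1) - ((1:ℤ):ℝ)) := by norm_num
    _ = Int.fract (x + 1) := Int.fract_sub_intCast _ _
    _ = x + 1 := Int.fract_eq_self.mpr ⟨by linarith, by linarith⟩

private lemma fract_big_case' (x : ℝ) (h1 : 1 ≤ x) (h2 : x < 2) : Int.fract x = x - 1 :=
  calc Int.fract x = Int.fract ((x - 1) + ((1:ℤ):ℝ)) := by norm_num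
    _ = Int.fract (x - 1) := Int.fract_add_intCast _ _
    _ = x - 1 := Int.fract_eq_self.mpr ⟨by linarith, by linarith⟩



theorem three_gap (α : ℝ) (hα : Irrational α) (N : ℕ) (hN : 2 ≤ N)
    (f l : ℕ) (hf0 : 0 < f) (hfN : f < N)
    (hf : ∀ m : ℕ, 0 < m → m < N → Int.fract (f * α) ≤ Int.fract (m * α))
    (hl0 : 0 < l) (hlN : l < N)
    (hl : ∀ m : ℕ, 0 < m → m < N → Int.fract (m * α) ≤ Int.fract (l * α))
    (after : ℕ → ℕ)
    (hafter : ∀ m : ℕ, m < N →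
      (after m < N) ∧
      ((∃ k : ℕ, k < N ∧ Int.fract (m * α) < Int.fract (k * α)) →
        Int.fract (m * α) < Int.fract (after m * α) ∧
        ∀ k : ℕ, k < N → Int.fract (m * α) < Int.fract (k * α) →
          Int.fract (after m * α) ≤ Int.fract (k * α)) ∧
      ((∀ k : ℕ, k < N → Int.fract (k * α) ≤ Int.fract (m * α)) → after m = 0)) :
    ∀ m : ℕ, m < N →
      ((m < N - f → (after m : ℤ) - m = f) ∧
       (N - f ≤ m → m < l → (after m : ℤ) - m = (f : ℤ) - l) ∧
       (l ≤ m → (after m : ℤ) - m = -(l : ℤ))) := by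
  -- basic facts
  have hirr : ∀ a : ℕ, 0 < a → Irrational ((a:ℝ) * α) := by
    intro a ha
    exact hα.natCast_mul (by omega)
  have hpos : ∀ a : ℕ, 0 < a → 0 < Int.fract ((a:ℝ) * α) := fun a ha =>
    Int.fract_pos.mpr ((hirr a ha).ne_int ⌊(a:ℝ) * α⌋)
  have hinj : ∀ a b : ℕ, Int.fract ((a:ℝ) * α) = Int.fract ((b:ℝ) * α) → a = b := by
    intro a b h
    by_contra hne
    obtain ⟨z, hz⟩ := Int.fract_eq_fract.mp h
    have hd : ((a:ℤ) - b) ≠ 0 := by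
      intro h0
      exact hne (by exact_mod_cast sub_eq_zero.mp h0)
    have hz' : ((((a:ℤ) - b : ℤ)) : ℝ) * α = ((z : ℤ) : ℝ) := by
      push_cast [sub_mul]; linarith
    exact (hα.intCast_mul hd).ne_int z hz'
  have haddf : ∀ a b : ℕ, Int.fract (((a+b:ℕ):ℝ) * α)
      = Int.fract (Int.fract ((a:ℝ)*α) + Int.fract ((b:ℝ)*α)) := by
    intro a b
    rw [fract_add_fract']
    congr 1
    push_cast; ring
  have hsubf : ∀ a b : ℕ, b ≤ a → Int.fract (((a-b:ℕ):ℝ) * α)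
      = Int.fract (Int.fract ((a:ℝ)*α) - Int.fract ((b:ℝ)*α)) := by
    intro a b hba
    rw [fract_sub_fract']
    congr 1
    push_cast [hba]; ring
  -- going up: k > m with larger fract
  have hup : ∀ m k : ℕ, m < k → Int.fract ((m:ℝ)*α) < Int.fract ((k:ℝ)*α) →
      Int.fract ((k:ℝ)*α) = Int.fract ((m:ℝ)*α) + Int.fract (((k-m:ℕ):ℝ)*α) := by
    intro m k hmk hlt
    have h1 := hsubf k m (le_of_lt hmk)
    have h2 : Int.fract (Int.fract ((k:ℝ)*α) - Int.fract ((m:ℝ)*α))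
        = Int.fract ((k:ℝ)*α) - Int.fract ((m:ℝ)*α) :=
      Int.fract_eq_self.mpr ⟨by linarith,
        by linarith [Int.fract_lt_one ((k:ℝ)*α), Int.fract_nonneg ((m:ℝ)*α)]⟩
    rw [h2] at h1
    linarith
  -- going down: k < m with larger fract
  have hdown : ∀ m k : ℕ, k < m → Int.fract ((m:ℝ)*α) < Int.fract ((k:ℝ)*α) →
      Int.fract ((k:ℝ)*α) = Int.fract ((m:ℝ)*α) + 1 - Int.fract (((m-k:ℕ):ℝ)*α) := by
    intro m k hkm hlt
    have h1 := hsubf m k (le_of_lt hkm)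
    have h2 : Int.fract (Int.fract ((m:ℝ)*α) - Int.fract ((k:ℝ)*α))
        = Int.fract ((m:ℝ)*α) - Int.fract ((k:ℝ)*α) + 1 :=
      fract_neg_case' _
        (by linarith [Int.fract_lt_one ((k:ℝ)*α), Int.fract_nonneg ((m:ℝ)*α)])
        (by linarith)
    rw [h2] at h1
    linarith
  have hS : ∀ a : ℕ, a + f < N → Int.fract ((a:ℝ)*α) + Int.fract ((f:ℝ)*α) < 1 := by
    intro a haf
    by_contra hge
    push_neg at hge
    have h1 := haddf a f
    have h2 : Int.fract (Int.fract ((a:ℝ)*α) + Int.fract ((f:ℝ)*α))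
        = Int.fract ((a:ℝ)*α) + Int.fract ((f:ℝ)*α) - 1 :=
      fract_big_case' _ hge
        (by linarith [Int.fract_lt_one ((a:ℝ)*α), Int.fract_lt_one ((f:ℝ)*α)])
    rw [h2] at h1
    have h3 := hf (a+f) (by omega) haf
    rw [h1] at h3
    linarith [Int.fract_lt_one ((a:ℝ)*α)]
  have hSe : ∀ a : ℕ, a + f < N → Int.fract (((a+f:ℕ):ℝ)*α)
      = Int.fract ((a:ℝ)*α) + Int.fract ((f:ℝ)*α) := by
    intro a haf
    have h2 : Int.fract (Int.fract ((a:ℝ)*α) + Int.fract ((f:ℝ)*α))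
        = Int.fract ((a:ℝ)*α) + Int.fract ((f:ℝ)*α) :=
      Int.fract_eq_self.mpr
        ⟨add_nonneg (Int.fract_nonneg _) (Int.fract_nonneg _), hS a haf⟩
    rw [haddf a f, h2]
  have hL : ∀ a : ℕ, 0 < a → a + l < N →
      1 < Int.fract ((a:ℝ)*α) + Int.fract ((l:ℝ)*α) := by
    intro a ha hal
    by_contra hle
    push_neg at hle
    rcases eq_or_lt_of_le hle with heq | hlt2
    · have h1 := haddf a l
      rw [heq, Int.fract_one] at h1
      exact absurd h1 (ne_of_gt (hpos (a+l) (by omega)))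
    · have h1 := haddf a l
      have h2 : Int.fract (Int.fract ((a:ℝ)*α) + Int.fract ((l:ℝ)*α))
          = Int.fract ((a:ℝ)*α) + Int.fract ((l:ℝ)*α) :=
        Int.fract_eq_self.mpr
          ⟨add_nonneg (Int.fract_nonneg _) (Int.fract_nonneg _), hlt2⟩
      rw [h2] at h1
      have h3 := hl (a+l) (by omega) hal
      rw [h1] at h3
      linarith [hpos a ha]
  have hfl : N ≤ f + l := by
    by_contra h
    push_neg at h
    have h1 := hSe l (by omega)
    have h3 := hl (l+f) (by omega) (by omega)
    rw [h1] at h3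
    linarith [hpos f hf0]
  have hAfter : ∀ m c : ℕ, m < N → c < N →
      Int.fract ((m:ℝ)*α) < Int.fract ((c:ℝ)*α) →
      (∀ k, k < N → Int.fract ((m:ℝ)*α) < Int.fract ((k:ℝ)*α) →
        Int.fract ((c:ℝ)*α) ≤ Int.fract ((k:ℝ)*α)) →
      after m = c := by
    intro m c hm hc hmc hmin
    obtain ⟨haN, hex, _⟩ := hafter m hm
    obtain ⟨h1, h2⟩ := hex ⟨c, hc, hmc⟩
    exact hinj _ _ (le_antisymm (h2 c hc hmc) (hmin (after m) haN h1))
  intro m hm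
  rcases lt_or_ge m (N - f) with hc1 | hge
  · -- region 1 : after m = m + f
    have hmfN : m + f < N := by omega
    have hcand := hSe m hmfN
    have hgt : Int.fract ((m:ℝ)*α) < Int.fract (((m+f:ℕ):ℝ)*α) := by
      rw [hcand]; linarith [hpos f hf0]
    have hmin : ∀ k, k < N → Int.fract ((m:ℝ)*α) < Int.fract ((k:ℝ)*α) →
        Int.fract (((m+f:ℕ):ℝ)*α) ≤ Int.fract ((k:ℝ)*α) := by
      intro k hk hmk
      rcases lt_trichotomy m k with h | h | h
      · have h1 := hup m k h hmk
        have hfk := hf (k-m) (by omega) (by omega)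
        rw [hcand]; linarith
      · exact absurd hmk (by rw [h]; exact lt_irrefl _)
      · have h1 := hdown m k h hmk
        have hs := hS (m-k) (by omega)
        rw [hcand]; linarith
    have he : after m = m + f := hAfter m (m+f) hm hmfN hgt hmin
    exact ⟨fun _ => by rw [he]; push_cast; ring,
      fun h2 _ => absurd h2 (by omega),
      fun h3 => absurd h3 (by omega)⟩
  · rcases lt_or_ge m l with hml' | hlm'
    · -- region 2 : after m = m + f - l
      have hlmf : l ≤ m + f := by omega
      have hc0 : 0 < m + f - l := by omega
      have hcN : m + f - l < N := by omega
      have hml : Int.fract ((m:ℝ)*α) < Int.fract ((l:ℝ)*α) := by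
        rcases Nat.eq_zero_or_pos m with h0 | h0
        · subst h0
          have : ((0:ℕ):ℝ) * α = 0 := by norm_num
          rw [this, Int.fract_zero]
          exact hpos l hl0
        · exact lt_of_le_of_ne (hl m h0 hm) (fun h => by have := hinj m l h; omega)
      have hupl := hup m l hml' hml
      have hlmne : l - m ≠ f := by omega
      have hflm : Int.fract ((f:ℝ)*α) < Int.fract (((l-m:ℕ):ℝ)*α) :=
        lt_of_le_of_ne (hf (l-m) (by omega) (by omega))
          (fun h => hlmne (hinj f (l-m) h).symm)
      have hkey : Int.fract ((m:ℝ)*α) + Int.fract ((f:ℝ)*α) < Int.fract ((l:ℝ)*α) := by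
        linarith
      have hcval : Int.fract (((m+f-l:ℕ):ℝ)*α)
          = Int.fract ((m:ℝ)*α) + Int.fract ((f:ℝ)*α) + 1 - Int.fract ((l:ℝ)*α) := by
        have h1 : ((m+f-l:ℕ):ℝ) * α = (m:ℝ)*α + (f:ℝ)*α - (l:ℝ)*α := by
          push_cast [hlmf]; ring
        rw [h1, ← fract_add_sub', fract_neg_case' _
          (by linarith [Int.fract_nonneg ((m:ℝ)*α), Int.fract_nonneg ((f:ℝ)*α),
            Int.fract_lt_one ((l:ℝ)*α)])
          (by linarith)]
        ring
      have hgt : Int.fract ((m:ℝ)*α) < Int.fract (((m+f-l:ℕ):ℝ)*α) := by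
        rw [hcval]
        linarith [Int.fract_lt_one ((l:ℝ)*α), hpos f hf0]
      have hmin : ∀ k, k < N → Int.fract ((m:ℝ)*α) < Int.fract ((k:ℝ)*α) →
          Int.fract (((m+f-l:ℕ):ℝ)*α) ≤ Int.fract ((k:ℝ)*α) := by
        intro k hk hmk
        rcases lt_trichotomy m k with h | h | h
        · have h1 := hup m k h hmk
          have hjf : k - m < f := by omega
          have hfj : Int.fract ((f:ℝ)*α) < Int.fract (((k-m:ℕ):ℝ)*α) :=
            lt_of_le_of_ne (hf (k-m) (by omega) (by omega))
              (fun hh => absurd (hinj f (k-m) hh) (by omega))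
          have h2 := hdown f (k-m) hjf hfj
          have h3 := hl (f-(k-m)) (by omega) (by omega)
          rw [hcval]; linarith
        · exact absurd hmk (by rw [h]; exact lt_irrefl _)
        · have h1 := hdown m k h hmk
          have hjl : m - k < l := by omega
          have hjlt : Int.fract (((m-k:ℕ):ℝ)*α) < Int.fract ((l:ℝ)*α) :=
            lt_of_le_of_ne (hl (m-k) (by omega) (by omega))
              (fun hh => absurd (hinj (m-k) l hh) (by omega))
          have h2 := hup (m-k) l hjl hjlt
          have h3 := hf (l-(m-k)) (by omega) (by omega)
          rw [hcval]; linarith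
      have he : after m = m + f - l := hAfter m (m+f-l) hm hcN hgt hmin
      refine ⟨fun h1 => absurd h1 (by omega),
        fun _ _ => ?_, fun h3 => absurd h3 (by omega)⟩
      rw [he]; omega
    · -- region 3 : after m = m - l (or 0 if m = l)
      rcases eq_or_lt_of_le hlm' with heq | hlt
      · -- m = l : maximal
        have hmax : ∀ k, k < N → Int.fract ((k:ℝ)*α) ≤ Int.fract ((m:ℝ)*α) := by
          intro k hk
          rcases Nat.eq_zero_or_pos k with h0 | h0
          · subst h0
            have : ((0:ℕ):ℝ) * α = 0 := by norm_num
            rw [this, Int.fract_zero]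
            exact Int.fract_nonneg _
          · rw [← heq]; exact hl k h0 hk
        have he : after m = 0 := (hafter m hm).2.2 hmax
        refine ⟨fun h1 => absurd h1 (by omega),
          fun _ h2 => absurd h2 (by omega), fun _ => ?_⟩
        rw [he]; omega
      · have hml : Int.fract ((m:ℝ)*α) < Int.fract ((l:ℝ)*α) :=
          lt_of_le_of_ne (hl m (by omega) hm)
            (fun h => by have := hinj m l h; omega)
        have hd := hdown m l hlt hml
        have hc0 : 0 < m - l := by omega
        have hcN : m - l < N := by omega
        have hcval : Int.fract (((m-l:ℕ):ℝ)*α)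
            = Int.fract ((m:ℝ)*α) + 1 - Int.fract ((l:ℝ)*α) := by linarith
        have hgt : Int.fract ((m:ℝ)*α) < Int.fract (((m-l:ℕ):ℝ)*α) := by
          rw [hcval]; linarith [Int.fract_lt_one ((l:ℝ)*α)]
        have hmin : ∀ k, k < N → Int.fract ((m:ℝ)*α) < Int.fract ((k:ℝ)*α) →
            Int.fract (((m-l:ℕ):ℝ)*α) ≤ Int.fract ((k:ℝ)*α) := by
          intro k hk hmk
          rcases lt_trichotomy m k with h | h | h
          · have h1 := hup m k h hmk
            have h2 := hL (k-m) (by omega) (by omega)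
            rw [hcval]; linarith
          · exact absurd hmk (by rw [h]; exact lt_irrefl _)
          · have h1 := hdown m k h hmk
            have h2 := hl (m-k) (by omega) (by omega)
            rw [hcval]; linarith
        have he : after m = m - l := hAfter m (m-l) hm hcN hgt hmin
        refine ⟨fun h1 => absurd h1 (by omega),
          fun _ h2 => absurd h2 (by omega), fun _ => ?_⟩
        rw [he]; omega
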